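/- Let R be a commutative ring and let E be a w-module over R. Then E is an injective R-module if and only if E is injective relative to monomorphisms of w-modules, i.e., for every injective R-linear map i : A → B between w-modules A and B, the induced map Hom_R(B, E) → Hom_R(A, E), f ↦ f ∘ i, is surjective. -/

import Mathlib

universe u v

section WDefs

variable (R : Type u) [CommRing R]

/-- The canonical `R`-linear map `R → Hom_R(J, R)`, `r ↦ (j ↦ r * j)`. -/
def gvCanonicalMap (J : Ideal R) : R →ₗ[R] (J →ₗ[R] R) where
  toFun r := r • (J.subtype)
  map_add' x y := add_smul x y _
  map_smul' r x := by simp [mul_smul]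

/-- A finitely generated ideal `J` of `R` is a GV-ideal (Glaz–Vasconcelos ideal)
if the canonical map `R → Hom_R(J, R)` is an isomorphism. -/
def IsGVIdeal (J : Ideal R) : Prop :=
  J.FG ∧ Function.Bijective (gvCanonicalMap R J)

/-- An ideal `I` of `R` is a w-ideal if whenever `J x ⊆ I` for some GV-ideal `J`,
then `x ∈ I`. -/
def IsWIdeal (I : Ideal R) : Prop :=
  ∀ x : R, (∃ J : Ideal R, IsGVIdeal R J ∧ ∀ j ∈ J, j * x ∈ I) → x ∈ I

/-- `m` is a maximal w-ideal: maximal among the proper w-ideals of `R`. -/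
def IsMaxWIdeal (m : Ideal R) : Prop :=
  IsWIdeal R m ∧ m ≠ ⊤ ∧ ∀ I : Ideal R, IsWIdeal R I → I ≠ ⊤ → m ≤ I → I = m

variable {M : Type v} [AddCommGroup M] [Module R M]

/-- `x` is a GV-torsion element if it is killed by some GV-ideal. -/
def IsGVTorsionElem (x : M) : Prop :=
  ∃ J : Ideal R, IsGVIdeal R J ∧ ∀ j ∈ J, j • x = 0

variable (M)

/-- `M` is GV-torsion-free if it has no nonzero GV-torsion element. -/
def IsGVTorsionFree : Prop := ∀ x : M, IsGVTorsionElem R x → x = 0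

/-- `M` is GV-torsion if all its elements are GV-torsion. -/
def IsGVTorsion : Prop := ∀ x : M, IsGVTorsionElem R x

/-- `M` is a w-module: GV-torsion-free and every map from a GV-ideal to `M`
extends to `R`. -/
def IsWModule : Prop :=
  IsGVTorsionFree R M ∧
    ∀ J : Ideal R, IsGVIdeal R J → ∀ f : J →ₗ[R] M,
      ∃ g : R →ₗ[R] M, ∀ x : J, g (x : R) = f x

end WDefs

section Aux

variable {R : Type u} [CommRing R]

theorem gvMap_apply (J : Ideal R) (r : R) (x : J) :
    gvCanonicalMap R J r x = r * (x : R) := rfl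

theorem IsGVIdeal.eq_zero {J : Ideal R} (hJ : IsGVIdeal R J) {r : R}
    (h : ∀ j ∈ J, j * r = 0) : r = 0 := by
  have h0 : gvCanonicalMap R J r = gvCanonicalMap R J 0 := by
    rw [map_zero]
    ext x
    rw [gvMap_apply, LinearMap.zero_apply, mul_comm]
    exact h x x.2
  exact hJ.2.1 h0

theorem IsGVIdeal.exists_rep {J : Ideal R} (hJ : IsGVIdeal R J) (f : J →ₗ[R] R) :
    ∃ r : R, ∀ j (hj : j ∈ J), f ⟨j, hj⟩ = r * j := by
  obtain ⟨r, hr⟩ := hJ.2.2 f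
  exact ⟨r, fun j hj => by rw [← hr, gvMap_apply]⟩

theorem isGVIdeal_top : IsGVIdeal R (⊤ : Ideal R) := by
  refine ⟨⟨{1}, by simp [Ideal.span_singleton_one]⟩, ?_, ?_⟩
  · intro a b hab
    have h1 : gvCanonicalMap R ⊤ a ⟨1, trivial⟩ = gvCanonicalMap R ⊤ b ⟨1, trivial⟩ := by
      rw [hab]
    simpa [gvMap_apply] using h1
  · intro f
    refine ⟨f ⟨1, trivial⟩, ?_⟩
    ext x
    rw [gvMap_apply]
    have hx : (x : (⊤ : Ideal R)) = (x : R) • ⟨1, trivial⟩ := by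
      ext; simp
    conv_rhs => rw [hx]
    rw [map_smul, smul_eq_mul, mul_comm]

theorem IsGVIdeal.mul {J K : Ideal R} (hJ : IsGVIdeal R J) (hK : IsGVIdeal R K) :
    IsGVIdeal R (J * K) := by
  refine ⟨Submodule.FG.mul hJ.1 hK.1, ?_, ?_⟩
  · -- injectivity
    have key : ∀ r : R, gvCanonicalMap R (J * K) r = 0 → r = 0 := by
      intro r hr
      apply hK.eq_zero
      intro k hk
      apply hJ.eq_zero
      intro j hj
      have h1 : gvCanonicalMap R (J * K) r ⟨j * k, Ideal.mul_mem_mul hj hk⟩ = 0 := by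
        rw [hr]; rfl
      rw [gvMap_apply] at h1
      calc j * (k * r) = r * (j * k) := by ring
        _ = 0 := h1
    intro a b hab
    have : gvCanonicalMap R (J * K) (a - b) = 0 := by
      rw [map_sub, hab, sub_self]
    exact sub_eq_zero.mp (key (a - b) this)
  · -- surjectivity
    intro f
    have hc : ∀ k : K, ∃ r : R, ∀ j (hj : j ∈ J),
        f ⟨j * (k : R), Ideal.mul_mem_mul hj k.2⟩ = r * j := by
      intro k
      refine hJ.exists_rep
        { toFun := fun j => f ⟨(j : R) * (k : R), Ideal.mul_mem_mul j.2 k.2⟩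
          map_add' := by
            intro a b
            show f ⟨((a + b : J) : R) * (k : R), Ideal.mul_mem_mul (a + b).2 k.2⟩
                = f ⟨(a : R) * (k : R), Ideal.mul_mem_mul a.2 k.2⟩
                  + f ⟨(b : R) * (k : R), Ideal.mul_mem_mul b.2 k.2⟩
            have he : (⟨((a + b : J) : R) * (k : R), Ideal.mul_mem_mul (a + b).2 k.2⟩ : (J * K))
                = ⟨(a : R) * (k : R), Ideal.mul_mem_mul a.2 k.2⟩
                  + ⟨(b : R) * (k : R), Ideal.mul_mem_mul b.2 k.2⟩ := by
              apply Subtype.ext; push_cast; ring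
            rw [he, map_add]
          map_smul' := by
            intro r a
            show f ⟨((r • a : J) : R) * (k : R), Ideal.mul_mem_mul (r • a).2 k.2⟩
                = r • f ⟨(a : R) * (k : R), Ideal.mul_mem_mul a.2 k.2⟩
            have he : (⟨((r • a : J) : R) * (k : R), Ideal.mul_mem_mul (r • a).2 k.2⟩ : (J * K))
                = r • ⟨(a : R) * (k : R), Ideal.mul_mem_mul a.2 k.2⟩ := by
              apply Subtype.ext; simp [smul_eq_mul]; ring
            rw [he, map_smul] }
    choose c hcspec using hc
    have uniq : ∀ (k : K) (r : R),
        (∀ j (hj : j ∈ J), f ⟨j * (k : R), Ideal.mul_mem_mul hj k.2⟩ = r * j) → r = c k := by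
      intro k r h
      have : r - c k = 0 := by
        apply hJ.eq_zero
        intro j hj
        have := h j hj
        have h2 := hcspec k j hj
        calc j * (r - c k) = r * j - c k * j := by ring
          _ = 0 := by rw [← this, ← h2, sub_self]
      exact (sub_eq_zero.mp this)
    have hadd : ∀ k1 k2 : K, c (k1 + k2) = c k1 + c k2 := by
      intro k1 k2
      refine (uniq (k1 + k2) (c k1 + c k2) ?_).symm
      intro j hj
      have he : (⟨j * ((k1 + k2 : K) : R), Ideal.mul_mem_mul hj (k1 + k2).2⟩ : (J * K)) =
          ⟨j * (k1 : R), Ideal.mul_mem_mul hj k1.2⟩ + ⟨j * (k2 : R), Ideal.mul_mem_mul hj k2.2⟩ := by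
        ext; push_cast; ring
      rw [he, map_add, hcspec k1 j hj, hcspec k2 j hj]
      ring
    have hsmul : ∀ (r : R) (k : K), c (r • k) = r * c k := by
      intro r k
      refine (uniq (r • k) (r * c k) ?_).symm
      intro j hj
      have he : (⟨j * ((r • k : K) : R), Ideal.mul_mem_mul hj (r • k).2⟩ : (J * K)) =
          r • ⟨j * (k : R), Ideal.mul_mem_mul hj k.2⟩ := by
        ext; simp [smul_eq_mul]; ring
      rw [he, map_smul, hcspec k j hj, smul_eq_mul]
      ring
    obtain ⟨s, hs⟩ := hK.exists_rep
      { toFun := c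
        map_add' := hadd
        map_smul' := hsmul }
    refine ⟨s, ?_⟩
    ext x
    rw [gvMap_apply]
    have main : ∀ (y : R) (hy : y ∈ J * K), f ⟨y, hy⟩ = s * y := by
      intro y hy
      refine Submodule.mul_induction_on' (C := fun y hy => f ⟨y, hy⟩ = s * y) ?_ ?_ hy
      · intro m hm n hn
        have h1 := hcspec ⟨n, hn⟩ m hm
        have h2 : c ⟨n, hn⟩ = s * n := hs n hn
        rw [h1, h2]
        ring
      · intro a ha b hb iha ihb
        have he : (⟨a + b, add_mem ha hb⟩ : (J * K)) = ⟨a, ha⟩ + ⟨b, hb⟩ := rfl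
        rw [he, map_add, iha, ihb]
        ring
    exact (main x x.2).symm

end Aux

section Aux2

variable {R : Type u} [CommRing R]

theorem isWModule_self : IsWModule R R := by
  constructor
  · rintro x ⟨J, hJ, h⟩
    exact hJ.eq_zero (fun j hj => by simpa [smul_eq_mul] using h j hj)
  · intro J hJ f
    obtain ⟨r, hr⟩ := hJ.exists_rep f
    refine ⟨LinearMap.toSpanSingleton R R r, fun x => ?_⟩
    rw [LinearMap.toSpanSingleton_apply, smul_eq_mul, mul_comm, ← hr x.1 x.2]

/-- The w-closure of an ideal `I`. -/
def wClosure (I : Ideal R) : Ideal R where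
  carrier := {x | ∃ J : Ideal R, IsGVIdeal R J ∧ ∀ j ∈ J, j * x ∈ I}
  add_mem' := by
    rintro a b ⟨J1, h1, ha⟩ ⟨J2, h2, hb⟩
    refine ⟨J1 * J2, h1.mul h2, fun j hj => ?_⟩
    have hj1 : j ∈ J1 := Ideal.mul_le_left hj
    have hj2 : j ∈ J2 := Ideal.mul_le_right hj
    rw [mul_add]
    exact I.add_mem (ha j hj1) (hb j hj2)
  zero_mem' := ⟨⊤, isGVIdeal_top, fun j _ => by simp⟩
  smul_mem' := by
    rintro r x ⟨J, hJ, hx⟩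
    refine ⟨J, hJ, fun j hj => ?_⟩
    rw [smul_eq_mul, show j * (r * x) = r * (j * x) by ring]
    exact I.mul_mem_left r (hx j hj)

theorem le_wClosure (I : Ideal R) : I ≤ wClosure I :=
  fun x hx => ⟨⊤, isGVIdeal_top, fun j _ => I.mul_mem_left j hx⟩

theorem mem_wClosure {I : Ideal R} {x : R} :
    x ∈ wClosure I ↔ ∃ J : Ideal R, IsGVIdeal R J ∧ ∀ j ∈ J, j * x ∈ I := Iff.rfl

theorem isGVIdeal_finsetProd {ι : Type*} (s : Finset ι) (Js : ι → Ideal R)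
    (h : ∀ a ∈ s, IsGVIdeal R (Js a)) : IsGVIdeal R (∏ a ∈ s, Js a) := by
  classical
  induction s using Finset.induction with
  | empty => simpa [Ideal.one_eq_top] using (isGVIdeal_top (R := R))
  | @insert a s ha ih =>
      rw [Finset.prod_insert ha]
      exact (h a (s.mem_insert_self a)).mul (ih fun b hb => h b (Finset.mem_insert_of_mem hb))

theorem finsetProd_le {ι : Type*} (s : Finset ι) (Js : ι → Ideal R) {b : ι} (hb : b ∈ s) :
    (∏ a ∈ s, Js a) ≤ Js b := by
  classical
  rw [← Finset.mul_prod_erase s Js hb]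
  exact Ideal.mul_le_left

theorem wClosure_isWIdeal (I : Ideal R) : IsWIdeal R (wClosure I) := by
  rintro x ⟨J, hJ, hx⟩
  obtain ⟨s, hs⟩ := hJ.1
  have hsJ : ∀ a ∈ s, (a : R) ∈ J := fun a ha => hs ▸ Ideal.subset_span ha
  have key : ∀ a : R, a ∈ J → ∃ K : Ideal R, IsGVIdeal R K ∧ ∀ q ∈ K, q * (a * x) ∈ I := by
    intro a ha
    exact hx a ha
  choose! K hK1 hK2 using key
  have hP : IsGVIdeal R (∏ a ∈ s, K a) :=
    isGVIdeal_finsetProd s K (fun a ha => hK1 a (hsJ a ha))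
  refine ⟨J * (∏ a ∈ s, K a), hJ.mul hP, ?_⟩
  intro p hp
  refine Submodule.mul_induction_on (C := fun p => p * x ∈ I) hp ?_ ?_
  · intro m hm q hq
    rw [show m * q * x = q * (m * x) by ring] at *
    have : ∀ (m : R) (hm : m ∈ J), q * (m * x) ∈ I := by
      intro m hm
      rw [← hs] at hm
      induction hm using Submodule.span_induction with
      | mem a ha =>
          exact hK2 a (hsJ a ha) q (finsetProd_le s K ha hq)
      | zero => simpa using I.zero_mem
      | add y z hy hz ihy ihz =>
          rw [show q * ((y + z) * x) = q * (y * x) + q * (z * x) by ring]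
          exact I.add_mem ihy ihz
      | smul r y hy ihy =>
          rw [smul_eq_mul, show q * (r * y * x) = r * (q * (y * x)) by ring]
          exact I.mul_mem_left r ihy
    exact this m hm
  · intro a b ha hb
    rw [add_mul]
    exact I.add_mem ha hb

theorem isWModule_wClosure (I : Ideal R) : IsWModule R ↥(wClosure I) := by
  constructor
  · rintro x ⟨J, hJ, h⟩
    apply Subtype.ext
    apply hJ.eq_zero
    intro j hj
    have := congrArg Subtype.val (h j hj)
    simpa [smul_eq_mul] using this
  · intro J hJ f
    obtain ⟨r, hr⟩ := hJ.exists_rep ((wClosure I).subtype ∘ₗ f)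
    have hrmem : r ∈ wClosure I := by
      apply wClosure_isWIdeal I
      refine ⟨J, hJ, fun j hj => ?_⟩
      have : ((f ⟨j, hj⟩ : ↥(wClosure I)) : R) = r * j := hr j hj
      rw [mul_comm, ← this]
      exact (f ⟨j, hj⟩).2
    refine ⟨LinearMap.toSpanSingleton R _ ⟨r, hrmem⟩, fun x => ?_⟩
    apply Subtype.ext
    have h1 : ((f x : ↥(wClosure I)) : R) = r * x := by
      have := hr x.1 x.2
      simpa using this
    show (x : R) • r = _
    rw [smul_eq_mul, mul_comm, ← h1]

end Aux2

section Aux3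

variable {R : Type u} [CommRing R] {E : Type u} [AddCommGroup E] [Module R E]

/-- `e` is a good value at `x ∈ I_w` for the extension of `f : I → E`. -/
def GoodExt (I : Ideal R) (f : I →ₗ[R] E) (x : ↥(wClosure I)) (e : E) : Prop :=
  ∃ J : Ideal R, IsGVIdeal R J ∧ ∃ hJx : ∀ j ∈ J, j * (x : R) ∈ I,
    ∀ j (hj : j ∈ J), j • e = f ⟨j * (x : R), hJx j hj⟩

theorem goodExt_uniq (hE : IsWModule R E) {I : Ideal R} {f : I →ₗ[R] E}
    {x : ↥(wClosure I)} {e1 e2 : E} (h1 : GoodExt I f x e1) (h2 : GoodExt I f x e2) :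
    e1 = e2 := by
  obtain ⟨J1, hJ1, hx1, hg1⟩ := h1
  obtain ⟨J2, hJ2, hx2, hg2⟩ := h2
  have : e1 - e2 = 0 := by
    apply hE.1
    refine ⟨J1 * J2, hJ1.mul hJ2, fun j hj => ?_⟩
    have hj1 : j ∈ J1 := Ideal.mul_le_left hj
    have hj2 : j ∈ J2 := Ideal.mul_le_right hj
    rw [smul_sub, hg1 j hj1, hg2 j hj2, sub_eq_zero]
  exact sub_eq_zero.mp this

theorem goodExt_exists (hE : IsWModule R E) (I : Ideal R) (f : I →ₗ[R] E)
    (x : ↥(wClosure I)) : ∃ e : E, GoodExt I f x e := by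
  obtain ⟨J, hJ, hJx⟩ := x.2
  obtain ⟨g, hg⟩ := hE.2 J hJ
    { toFun := fun j : J => f ⟨(j : R) * (x : R), hJx j j.2⟩
      map_add' := by
        intro a b
        show f ⟨((a + b : J) : R) * (x : R), hJx _ (a + b).2⟩
            = f ⟨(a : R) * (x : R), hJx _ a.2⟩ + f ⟨(b : R) * (x : R), hJx _ b.2⟩
        have he : (⟨((a + b : J) : R) * (x : R), hJx _ (a + b).2⟩ : I)
            = ⟨(a : R) * (x : R), hJx _ a.2⟩ + ⟨(b : R) * (x : R), hJx _ b.2⟩ := by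
          apply Subtype.ext; push_cast; ring
        rw [he, map_add]
      map_smul' := by
        intro r a
        show f ⟨((r • a : J) : R) * (x : R), hJx _ (r • a).2⟩
            = r • f ⟨(a : R) * (x : R), hJx _ a.2⟩
        have he : (⟨((r • a : J) : R) * (x : R), hJx _ (r • a).2⟩ : I)
            = r • ⟨(a : R) * (x : R), hJx _ a.2⟩ := by
          apply Subtype.ext
          show ((r • a : J) : R) * (x : R) = r • ((a : R) * (x : R))
          simp [smul_eq_mul]; ring
        rw [he, map_smul]  }
  refine ⟨g 1, J, hJ, hJx, fun j hj => ?_⟩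
  have h1 := hg ⟨j, hj⟩
  have h2 : g j = j • g 1 := by
    rw [← map_smul, smul_eq_mul, mul_one]
  rw [← h2]
  exact h1

theorem goodExt_add {I : Ideal R} {f : I →ₗ[R] E} {x y : ↥(wClosure I)} {e1 e2 : E}
    (hx : GoodExt I f x e1) (hy : GoodExt I f y e2) : GoodExt I f (x + y) (e1 + e2) := by
  obtain ⟨J1, hJ1, hx1, hg1⟩ := hx
  obtain ⟨J2, hJ2, hy1, hg2⟩ := hy
  have hsum : ∀ j ∈ J1 * J2, j * ((x + y : ↥(wClosure I)) : R) ∈ I := by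
    intro j hj
    have hj1 : j ∈ J1 := Ideal.mul_le_left hj
    have hj2 : j ∈ J2 := Ideal.mul_le_right hj
    have : j * ((x + y : ↥(wClosure I)) : R) = j * (x : R) + j * (y : R) := by
      push_cast; ring
    rw [this]
    exact I.add_mem (hx1 j hj1) (hy1 j hj2)
  refine ⟨J1 * J2, hJ1.mul hJ2, hsum, fun j hj => ?_⟩
  have hj1 : j ∈ J1 := Ideal.mul_le_left hj
  have hj2 : j ∈ J2 := Ideal.mul_le_right hj
  have he : (⟨j * ((x + y : ↥(wClosure I)) : R), hsum j hj⟩ : I)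
      = ⟨j * (x : R), hx1 j hj1⟩ + ⟨j * (y : R), hy1 j hj2⟩ := by
    apply Subtype.ext; push_cast; ring
  rw [smul_add, hg1 j hj1, hg2 j hj2, he, map_add]

theorem goodExt_smul {I : Ideal R} {f : I →ₗ[R] E} {x : ↥(wClosure I)} {e : E}
    (r : R) (hx : GoodExt I f x e) : GoodExt I f (r • x) (r • e) := by
  obtain ⟨J, hJ, hx1, hg1⟩ := hx
  have hsm : ∀ j ∈ J, j * ((r • x : ↥(wClosure I)) : R) ∈ I := by
    intro j hj
    have : j * ((r • x : ↥(wClosure I)) : R) = r * (j * (x : R)) := by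
      push_cast [smul_eq_mul]; ring
    rw [this]
    exact I.mul_mem_left r (hx1 j hj)
  refine ⟨J, hJ, hsm, fun j hj => ?_⟩
  have he : (⟨j * ((r • x : ↥(wClosure I)) : R), hsm j hj⟩ : I)
      = r • ⟨j * (x : R), hx1 j hj⟩ := by
    apply Subtype.ext
    show j * ((r • x : ↥(wClosure I)) : R) = r • (j * (x : R))
    push_cast [smul_eq_mul]; ring
  rw [smul_comm, hg1 j hj, ← map_smul, ← he]

theorem goodExt_mem {I : Ideal R} {f : I →ₗ[R] E} {x : ↥(wClosure I)}
    (hx : (x : R) ∈ I) : GoodExt I f x (f ⟨(x : R), hx⟩) := by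
  have htop : ∀ j ∈ (⊤ : Ideal R), j * (x : R) ∈ I := fun j _ => I.mul_mem_left j hx
  refine ⟨⊤, isGVIdeal_top, htop, fun j hj => ?_⟩
  have he : (⟨j * (x : R), htop j hj⟩ : I) = j • ⟨(x : R), hx⟩ := by
    apply Subtype.ext
    show j * (x : R) = j • (x : R)
    rw [smul_eq_mul]
  rw [he, map_smul]

end Aux3

/-- A w-module `E` is an injective `R`-module if and only if `E` is
injective relative to monomorphisms of w-modules: for every injective linear map
`i : A → B` between w-modules, every `f : A → E` factors as `f = g ∘ i`. -/
theorem wModule_injective_iff_relatively_injective {R : Type u} [CommRing R]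
    {E : Type u} [AddCommGroup E] [Module R E] (hE : IsWModule R E) :
    Module.Injective R E ↔
      ∀ (A B : Type u) [AddCommGroup A] [AddCommGroup B] [Module R A] [Module R B],
        IsWModule R A → IsWModule R B →
          ∀ (i : A →ₗ[R] B), Function.Injective i →
            ∀ f : A →ₗ[R] E, ∃ g : B →ₗ[R] E, g.comp i = f := by
  constructor
  · intro hInj A B _ _ _ _ hA hB i hi f
    obtain ⟨g, hg⟩ := hInj.out i hi f
    exact ⟨g, LinearMap.ext hg⟩
  · intro h
    apply Module.Baer.injective
    intro I f
    choose Fe hFe using goodExt_exists hE I f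
    let F : ↥(wClosure I) →ₗ[R] E :=
      { toFun := Fe
        map_add' := fun x y => goodExt_uniq hE (hFe (x + y)) (goodExt_add (hFe x) (hFe y))
        map_smul' := fun r x => goodExt_uniq hE (hFe (r • x)) (goodExt_smul r (hFe x)) }
    obtain ⟨g, hg⟩ := h (↥(wClosure I)) R (isWModule_wClosure I) isWModule_self
      ((wClosure I).subtype) Subtype.val_injective F
    refine ⟨g, fun x hx => ?_⟩
    have h1 : g x = F ⟨x, le_wClosure I hx⟩ := DFunLike.congr_fun hg ⟨x, le_wClosure I hx⟩
    rw [h1]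
    exact goodExt_uniq hE (hFe ⟨x, le_wClosure I hx⟩) (goodExt_mem hx)
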